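/- Let ξ satisfy the curve condition, let 0 < r₀ < r̃₀, and assume the function x ↦ s(x) is twice differentiable on Γ_{r₀} \ Γ. Then for every x ∈ Γ_{r₀} \ Γ, Δs(x) = (x − ξ(s(x))) · ξ'''(s(x)) / (1 − (x − ξ(s(x))) · ξ''(s(x)))³. -/

import Mathlib

open scoped RealInnerProductSpace
open Filter Topology Set

/-- The Laplacian of `f : ℝⁿ → ℝ`: the sum of the second derivatives along the
standard orthonormal coordinate directions. -/
noncomputable def lap {n : ℕ} (f : EuclideanSpace ℝ (Fin n) → ℝ)
    (x : EuclideanSpace ℝ (Fin n)) : ℝ :=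
  ∑ i : Fin n, iteratedFDeriv ℝ 2 f x ![EuclideanSpace.single i 1, EuclideanSpace.single i 1]

/-- `m_* = 0` if `n = 2` and `(n-3)/(n-1)` if `n ≥ 3`. -/
noncomputable def mstar (n : ℕ) : ℝ := if n = 2 then 0 else ((n : ℝ) - 3) / ((n : ℝ) - 1)

theorem stmt_9 (n : ℕ) (hn : 2 ≤ n)
    (ξ : ℝ → EuclideanSpace ℝ (Fin n))
    (hξC3 : ContDiff ℝ 3 ξ) (hξinj : Function.Injective ξ)
    (hξ1 : ∀ σ : ℝ, ‖deriv ξ σ‖ = 1)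
    (K : ℝ) (hK : 1 < K)
    (hξ2 : ∀ σ : ℝ, ‖deriv (deriv ξ) σ‖ ≤ K)
    (hξ3 : ∀ σ : ℝ, ‖deriv (deriv (deriv ξ)) σ‖ ≤ K)
    (r : EuclideanSpace ℝ (Fin n) → ℝ)
    (hrdef : ∀ x, r x = Metric.infDist x (Set.range ξ))
    (rt0 : ℝ) (hrt0 : 0 < rt0) (hrt0' : rt0 < (2 * K)⁻¹)
    (s : EuclideanSpace ℝ (Fin n) → ℝ)
    (hsdef : ∀ x, r x < rt0 →
      r x = ‖x - ξ (s x)‖ ∧ ∀ σ : ℝ, r x = ‖x - ξ σ‖ → σ = s x)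
    (r₀ : ℝ) (hr₀ : 0 < r₀) (hr₀' : r₀ < rt0)
    (hsdiff : ∀ x : EuclideanSpace ℝ (Fin n), r x < r₀ → x ∉ Set.range ξ →
      ContDiffAt ℝ 2 s x) :
    ∀ x : EuclideanSpace ℝ (Fin n), r x < r₀ → x ∉ Set.range ξ →
      lap s x = ⟪x - ξ (s x), deriv (deriv (deriv ξ)) (s x)⟫
        / (1 - ⟪x - ξ (s x), deriv (deriv ξ) (s x)⟫) ^ 3 := by
  have hK0 : (0:ℝ) < K := lt_trans one_pos hK
  -- smoothness of ξ and its derivatives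
  have hξd : Differentiable ℝ ξ := hξC3.differentiable (by norm_num)
  have hC2 : ContDiff ℝ 2 (deriv ξ) :=
    ((contDiff_succ_iff_deriv (n := 2)).mp (by exact_mod_cast hξC3)).2.2
  have hξ'd : Differentiable ℝ (deriv ξ) := hC2.differentiable (by norm_num)
  have hC1 : ContDiff ℝ 1 (deriv (deriv ξ)) :=
    ((contDiff_succ_iff_deriv (n := 1)).mp (by exact_mod_cast hC2)).2.2
  have hξ''d : Differentiable ℝ (deriv (deriv ξ)) := hC1.differentiable (by norm_num)
  have hd1 : ∀ σ, HasDerivAt ξ (deriv ξ σ) σ := fun σ => (hξd σ).hasDerivAt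
  have hd2 : ∀ σ, HasDerivAt (deriv ξ) (deriv (deriv ξ) σ) σ := fun σ => (hξ'd σ).hasDerivAt
  have hd3 : ∀ σ, HasDerivAt (deriv (deriv ξ)) (deriv (deriv (deriv ξ)) σ) σ :=
    fun σ => (hξ''d σ).hasDerivAt
  have hn1 : ∀ σ, ⟪deriv ξ σ, deriv ξ σ⟫ = (1:ℝ) := fun σ => by
    rw [real_inner_self_eq_norm_sq, hξ1 σ]; norm_num
  have horth : ∀ σ, ⟪deriv ξ σ, deriv (deriv ξ) σ⟫ = (0:ℝ) := by
    intro σ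
    have h2 : HasDerivAt (fun t => ⟪deriv ξ t, deriv ξ t⟫)
        (⟪deriv ξ σ, deriv (deriv ξ) σ⟫ + ⟪deriv (deriv ξ) σ, deriv ξ σ⟫) σ :=
      (hd2 σ).inner ℝ (hd2 σ)
    simp only [hn1] at h2
    have h0 := h2.unique (hasDerivAt_const σ 1)
    have hcomm : ⟪deriv (deriv ξ) σ, deriv ξ σ⟫ = ⟪deriv ξ σ, deriv (deriv ξ) σ⟫ :=
      real_inner_comm _ _
    linarith
  -- basic tube facts
  have hr_nonneg : ∀ y, 0 ≤ r y := fun y => by rw [hrdef]; exact Metric.infDist_nonneg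
  have hrcont : Continuous r := by
    have : r = fun y => Metric.infDist y (Set.range ξ) := funext hrdef
    rw [this]; exact Metric.continuous_infDist_pt _
  have hnorm : ∀ y, r y < r₀ → ‖y - ξ (s y)‖ = r y :=
    fun y hy => ((hsdef y (hy.trans hr₀')).1).symm
  have hnotin : ∀ y : EuclideanSpace ℝ (Fin n), 0 < r y → y ∉ Set.range ξ := by
    rintro y hy ⟨a, ha⟩
    have h1 : r y ≤ dist y (ξ a) := by
      rw [hrdef]; exact Metric.infDist_le_dist_of_mem ⟨a, rfl⟩
    rw [ha] at h1; simp at h1; linarith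
  have hUopen : IsOpen {y : EuclideanSpace ℝ (Fin n) | 0 < r y ∧ r y < r₀} := by
    have : {y : EuclideanSpace ℝ (Fin n) | 0 < r y ∧ r y < r₀} = r ⁻¹' (Set.Ioo 0 r₀) := rfl
    rw [this]; exact isOpen_Ioo.preimage hrcont
  have hgpos : ∀ y : EuclideanSpace ℝ (Fin n), r y < r₀ →
      (1:ℝ)/2 < 1 - ⟪y - ξ (s y), deriv (deriv ξ) (s y)⟫ := by
    intro y hy2
    have h1 : |⟪y - ξ (s y), deriv (deriv ξ) (s y)⟫| ≤ ‖y - ξ (s y)‖ * ‖deriv (deriv ξ) (s y)‖ :=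
      abs_real_inner_le_norm _ _
    have h2 : ‖y - ξ (s y)‖ * ‖deriv (deriv ξ) (s y)‖ ≤ r y * K := by
      rw [hnorm y hy2]
      exact mul_le_mul_of_nonneg_left (hξ2 _) (hr_nonneg y)
    have h3 : r y * K < 1/2 := by
      have h4 : r y * K < rt0 * K := by nlinarith [hy2, hr₀']
      have h5 : rt0 * K < (2*K)⁻¹ * K := by nlinarith
      have h6 : (2*K)⁻¹ * K = 1/2 := by field_simp
      linarith
    have h7 := abs_lt.mp (lt_of_le_of_lt (h1.trans h2) h3)
    linarith [h7.2]
  -- first-order condition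
  have hfo : ∀ y : EuclideanSpace ℝ (Fin n), r y < r₀ →
      ⟪y - ξ (s y), deriv ξ (s y)⟫ = (0:ℝ) := by
    intro y hy2
    have hmin : IsLocalMin (fun t => ⟪y - ξ t, y - ξ t⟫) (s y) := by
      apply Filter.Eventually.of_forall
      intro t
      have h1 : r y ≤ ‖y - ξ t‖ := by
        rw [hrdef, ← dist_eq_norm]
        exact Metric.infDist_le_dist_of_mem ⟨t, rfl⟩
      have h2 : ‖y - ξ (s y)‖ ≤ ‖y - ξ t‖ := by rw [hnorm y hy2]; exact h1
      simp only [real_inner_self_eq_norm_sq]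
      exact pow_le_pow_left₀ (norm_nonneg _) h2 2
    have hder : HasDerivAt (fun t => ⟪y - ξ t, y - ξ t⟫)
        (⟪y - ξ (s y), -deriv ξ (s y)⟫ + ⟪-deriv ξ (s y), y - ξ (s y)⟫) (s y) :=
      ((hd1 (s y)).const_sub y).inner ℝ ((hd1 (s y)).const_sub y)
    have h0 := hmin.hasDerivAt_eq_zero hder
    rw [inner_neg_right, inner_neg_left] at h0
    have hcomm : ⟪deriv ξ (s y), y - ξ (s y)⟫ = ⟪y - ξ (s y), deriv ξ (s y)⟫ :=
      real_inner_comm _ _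
    linarith
  -- the bilinear inner product map
  set T : EuclideanSpace ℝ (Fin n) →L[ℝ] EuclideanSpace ℝ (Fin n) →L[ℝ] ℝ :=
    (isBoundedBilinearMap_inner (𝕜 := ℝ)).toContinuousLinearMap with hT
  have hTapp : ∀ v w : EuclideanSpace ℝ (Fin n), T v w = ⟪v, w⟫ := fun v w => rfl
  -- gradient formula for s
  have hsderiv : ∀ y : EuclideanSpace ℝ (Fin n), 0 < r y → r y < r₀ →
      HasFDerivAt s
        (T ((1 - ⟪y - ξ (s y), deriv (deriv ξ) (s y)⟫)⁻¹ • deriv ξ (s y))) y := by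
    intro y hy1 hy2
    have hsd : DifferentiableAt ℝ s y :=
      (hsdiff y hy2 (hnotin y hy1)).differentiableAt (by norm_num)
    have hL : HasFDerivAt s (fderiv ℝ s y) y := hsd.hasFDerivAt
    set L := fderiv ℝ s y with hLdef
    have hc1 := ((hd1 (s y)).hasFDerivAt).comp y hL
    have hc2 := ((hd2 (s y)).hasFDerivAt).comp y hL
    have hpy := (hasFDerivAt_id y).sub hc1
    have hG := hpy.inner ℝ hc2
    have hGf : fderiv ℝ (fun y' => ⟪y' - ξ (s y'), deriv ξ (s y')⟫) y = 0 := by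
      have hev : (fun y' : EuclideanSpace ℝ (Fin n) => ⟪y' - ξ (s y'), deriv ξ (s y')⟫)
          =ᶠ[𝓝 y] (fun _ => (0:ℝ)) := by
        filter_upwards [hUopen.mem_nhds (show y ∈ _ from ⟨hy1, hy2⟩)] with z hz
        exact hfo z hz.2
      rw [hev.fderiv_eq]
      exact fderiv_const_apply 0
    have hD0 := hG.fderiv.symm.trans hGf
    have hgne : (1 - ⟪y - ξ (s y), deriv (deriv ξ) (s y)⟫) ≠ 0 := by
      have := hgpos y hy2; linarith
    have hLeq : T ((1 - ⟪y - ξ (s y), deriv (deriv ξ) (s y)⟫)⁻¹ • deriv ξ (s y)) = L := by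
      ext h
      have h0 := DFunLike.congr_fun hD0 h
      simp only [ContinuousLinearMap.comp_apply, ContinuousLinearMap.prod_apply,
        fderivInnerCLM_apply, ContinuousLinearMap.sub_apply, ContinuousLinearMap.id_apply,
        ContinuousLinearMap.smulRight_apply, ContinuousLinearMap.one_apply,
        inner_smul_right, inner_sub_left, inner_smul_left, conj_trivial,
        Function.comp_apply, id_eq,
        ContinuousLinearMap.zero_apply, hn1, smul_eq_mul,
        ContinuousLinearMap.toSpanSingleton_apply, Pi.sub_apply] at h0
      have h2 : L h * (1 - ⟪y - ξ (s y), deriv (deriv ξ) (s y)⟫) = ⟪h, deriv ξ (s y)⟫ := by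
        rw [inner_sub_left]
        linear_combination -h0
      rw [hTapp, real_inner_smul_left, real_inner_comm h (deriv ξ (s y)), ← h2, mul_comm (L h),
        inv_mul_cancel_left₀ hgne]
    rw [← hLeq] at hL
    exact hL
  -- pointwise coordinate lemmas
  have hsingle : ∀ (v : EuclideanSpace ℝ (Fin n)) (i : Fin n),
      ⟪v, EuclideanSpace.single i 1⟫ = v i := by
    intro v i
    rw [EuclideanSpace.inner_single_right]
    simp
  have hsingle' : ∀ (v : EuclideanSpace ℝ (Fin n)) (i : Fin n),
      ⟪EuclideanSpace.single i (1:ℝ), v⟫ = v i := by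
    intro v i
    rw [EuclideanSpace.inner_single_left]
    simp
  have hsum : ∀ v w : EuclideanSpace ℝ (Fin n), ∑ i, v i * w i = ⟪v, w⟫ := by
    intro v w
    rw [PiLp.inner_apply]
    simp [RCLike.inner_apply]
    exact Finset.sum_congr rfl (fun i _ => mul_comm _ _)
  -- main computation
  intro x hxr hxΓ
  have hxpos : 0 < r x := by
    rcases (hr_nonneg x).lt_or_eq with h | h
    · exact h
    · exfalso
      apply hxΓ
      have h1 : ‖x - ξ (s x)‖ = 0 := (hnorm x hxr).trans h.symm
      exact ⟨s x, (sub_eq_zero.mp (norm_eq_zero.mp h1)).symm⟩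
  have hg0pos : (0:ℝ) < 1 - ⟪x - ξ (s x), deriv (deriv ξ) (s x)⟫ := by
    have := hgpos x hxr; linarith
  have hg0ne : (1 - ⟪x - ξ (s x), deriv (deriv ξ) (s x)⟫) ≠ 0 := ne_of_gt hg0pos
  have hLx : HasFDerivAt s
      (T ((1 - ⟪x - ξ (s x), deriv (deriv ξ) (s x)⟫)⁻¹ • deriv ξ (s x))) x :=
    hsderiv x hxpos hxr
  have hc1 := ((hd1 (s x)).hasFDerivAt).comp x hLx
  have hc2 := ((hd2 (s x)).hasFDerivAt).comp x hLx
  have hc3 := ((hd3 (s x)).hasFDerivAt).comp x hLx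
  have hpx := (hasFDerivAt_id x).sub hc1
  have hginner := hpx.inner ℝ hc3
  have hgder := (hasFDerivAt_const (1:ℝ) x).sub hginner
  have hginv := (hasDerivAt_inv hg0ne).comp_hasFDerivAt_of_eq x hgder rfl
  have hw := hginv.smul hc2
  have hΦ := (T.hasFDerivAt).comp x hw
  have hev : fderiv ℝ s =ᶠ[𝓝 x]
      (fun y => T ((1 - ⟪y - ξ (s y), deriv (deriv ξ) (s y)⟫)⁻¹ • deriv ξ (s y))) := by
    filter_upwards [hUopen.mem_nhds (show x ∈ _ from ⟨hxpos, hxr⟩)] with z hz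
    exact (hsderiv z hz.1 hz.2).fderiv
  have hfe := (hev.fderiv_eq).trans (HasFDerivAt.fderiv hΦ)
  simp only [lap, iteratedFDeriv_two_apply, Matrix.cons_val_zero, Matrix.cons_val_one,
    Matrix.head_cons, hfe]
  simp only [ContinuousLinearMap.comp_apply, ContinuousLinearMap.add_apply,
    ContinuousLinearMap.smul_apply, ContinuousLinearMap.smulRight_apply,
    ContinuousLinearMap.one_apply, ContinuousLinearMap.sub_apply, ContinuousLinearMap.id_apply,
    ContinuousLinearMap.prod_apply, fderivInnerCLM_apply, ContinuousLinearMap.zero_apply,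
    hTapp, Function.comp_apply, id_eq, smul_eq_mul,
    inner_add_left, inner_smul_left, inner_smul_right, inner_sub_left, inner_sub_right,
    conj_trivial, hn1, horth, hsingle, hsingle', PiLp.add_apply, PiLp.smul_apply,
    ContinuousLinearMap.toSpanSingleton_apply, Pi.sub_apply]
  have e1 : ∑ i : Fin n, deriv ξ (s x) i * deriv ξ (s x) i = 1 := by
    rw [hsum]; exact hn1 _
  have e2 : ∑ i : Fin n, deriv ξ (s x) i * deriv (deriv ξ) (s x) i = 0 := by
    rw [hsum]; exact horth _
  have hGne' : (1 - (⟪x, deriv (deriv ξ) (s x)⟫ - ⟪ξ (s x), deriv (deriv ξ) (s x)⟫)) ≠ 0 := by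
    rw [← inner_sub_left]; exact hg0ne
  set G : ℝ := 1 - (⟪x, deriv (deriv ξ) (s x)⟫ - ⟪ξ (s x), deriv (deriv ξ) (s x)⟫) with hG
  set P : ℝ := ⟪x, deriv (deriv (deriv ξ)) (s x)⟫ - ⟪ξ (s x), deriv (deriv (deriv ξ)) (s x)⟫
    with hP
  trans ((G⁻¹ * G⁻¹ + (G ^ 2)⁻¹) * (∑ i : Fin n, deriv ξ (s x) i * deriv (deriv ξ) (s x) i) +
      ((G ^ 2)⁻¹ * G⁻¹ * P) * (∑ i : Fin n, deriv ξ (s x) i * deriv ξ (s x) i))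
  · rw [Finset.mul_sum, Finset.mul_sum, ← Finset.sum_add_distrib]
    exact Finset.sum_congr rfl (fun i _ => by ring)
  · rw [e1, e2]
    field_simp
    simp only [hG, hP, inner_sub_left]
    ring
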